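/- Let G : C ⥤ D be a strong monoidal functor, G ⊣ R a monoidal adjunction, and suppose the right projection formula morphism rproj_{X,A} : R(X) ⊗ A ⟶ R(X ⊗ G(A)), defined as lax^R_{X,GA} ∘ (id_{RX} ⊗ unit_A), is an isomorphism for all A ∈ C, X ∈ D. Then for every X ∈ D, the assignment A ↦ R(X ⊗ G(A)) defines a right C-module endofunctor of C (with right lineator built from oplax^G and rproj⁻¹), and the morphisms rproj_{X,-} : (R(X) ⊗ -) ⟶ R(X ⊗ G(-)) form an isomorphism of right C-module functors; moreover this isomorphism is monoidal: lax^R_{X,Y} ⊗ A followed by rproj_{X⊗Y,A} equals rproj_{X, R(Y⊗GA)} ∘ (id ⊗ rproj_{Y,A}) followed by lax^R_{X, Y⊗GA} and R(X ⊗ counit). -/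

import Mathlib

open CategoryTheory MonoidalCategory Functor.LaxMonoidal Functor.OplaxMonoidal

universe v₁ v₂ u₁ u₂

variable {C : Type u₁} [Category.{v₁} C] [MonoidalCategory C]
variable {D : Type u₂} [Category.{v₂} D] [MonoidalCategory D]

/-- The lax monoidal functor axioms together with the monoidal adjunction conditions
for a lax structure `(μR, εR)` on the right adjoint `R` of a strong monoidal `G`. -/
def IsMonoidalAdjunctionStructure (G : C ⥤ D) [G.Monoidal] (R : D ⥤ C) (adj : G ⊣ R)
    (μR : ∀ X Y : D, R.obj X ⊗ R.obj Y ⟶ R.obj (X ⊗ Y)) (εR : 𝟙_ C ⟶ R.obj (𝟙_ D)) :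
    Prop :=
  (∀ {X Y X' Y' : D} (f : X ⟶ X') (g : Y ⟶ Y'),
    (R.map f ⊗ₘ R.map g) ≫ μR X' Y' = μR X Y ≫ R.map (f ⊗ₘ g)) ∧
  (∀ X Y Z : D,
    (μR X Y ▷ R.obj Z) ≫ μR (X ⊗ Y) Z ≫ R.map (α_ X Y Z).hom =
      (α_ (R.obj X) (R.obj Y) (R.obj Z)).hom ≫ (R.obj X ◁ μR Y Z) ≫ μR X (Y ⊗ Z)) ∧
  (∀ X : D, (εR ▷ R.obj X) ≫ μR (𝟙_ D) X ≫ R.map (λ_ X).hom = (λ_ (R.obj X)).hom) ∧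
  (∀ X : D, (R.obj X ◁ εR) ≫ μR X (𝟙_ D) ≫ R.map (ρ_ X).hom = (ρ_ (R.obj X)).hom) ∧
  (∀ A B : C,
    (adj.unit.app A ⊗ₘ adj.unit.app B) ≫ μR (G.obj A) (G.obj B) ≫ R.map (μ G A B) =
      adj.unit.app (A ⊗ B)) ∧
  (adj.unit.app (𝟙_ C) = εR ≫ R.map (ε G)) ∧
  (∀ X Y : D,
    μ G (R.obj X) (R.obj Y) ≫ G.map (μR X Y) ≫ adj.counit.app (X ⊗ Y) =
      (adj.counit.app X ⊗ₘ adj.counit.app Y)) ∧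
  (ε G ≫ G.map εR ≫ adj.counit.app (𝟙_ D) = 𝟙 (𝟙_ D))

/-- The right projection formula morphism `R(X) ⊗ A ⟶ R(X ⊗ G(A))` of a monoidal
adjunction `G ⊣ R`, namely `lax^R_{X,G(A)} ∘ (id ⊗ unit_A)`. -/
def rproj (G : C ⥤ D) (R : D ⥤ C) (adj : G ⊣ R)
    (μR : ∀ X Y : D, R.obj X ⊗ R.obj Y ⟶ R.obj (X ⊗ Y)) (X : D) (A : C) :
    R.obj X ⊗ A ⟶ R.obj (X ⊗ G.obj A) :=
  (R.obj X ◁ adj.unit.app A) ≫ μR X (G.obj A)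

/-- The right lineator of the right `C`-module endofunctor `A ↦ R(X ⊗ G(A))` of `C`,
built from the oplax structure of `G` and the inverse of the right projection formula
morphism. -/
noncomputable def rlinor (G : C ⥤ D) [G.Monoidal] (R : D ⥤ C) (adj : G ⊣ R)
    (μR : ∀ X Y : D, R.obj X ⊗ R.obj Y ⟶ R.obj (X ⊗ Y))
    (hiso : ∀ (X : D) (A : C), IsIso (rproj G R adj μR X A)) (X : D) (A B : C) :
    R.obj (X ⊗ G.obj (A ⊗ B)) ⟶ R.obj (X ⊗ G.obj A) ⊗ B :=
  letI := hiso (X ⊗ G.obj A) B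
  R.map ((X ◁ δ G A B) ≫ (α_ X (G.obj A) (G.obj B)).inv) ≫
    CategoryTheory.inv (rproj G R adj μR (X ⊗ G.obj A) B)

section Aux

variable (G : C ⥤ D) [G.Monoidal] (R : D ⥤ C) (adj : G ⊣ R)
  (μR : ∀ X Y : D, R.obj X ⊗ R.obj Y ⟶ R.obj (X ⊗ Y))

/-- Right-whiskered naturality of `μR`. -/
lemma muR_natural_right
    (hnat : ∀ {X Y X' Y' : D} (f : X ⟶ X') (g : Y ⟶ Y'),
      (R.map f ⊗ₘ R.map g) ≫ μR X' Y' = μR X Y ≫ R.map (f ⊗ₘ g))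
    (X : D) {Y Y' : D} (g : Y ⟶ Y') :
    (R.obj X ◁ R.map g) ≫ μR X Y' = μR X Y ≫ R.map (X ◁ g) := by
  have h := hnat (𝟙 X) g
  simpa using h

/-- Associativity of `μR` in the inverse-associator form. -/
lemma muR_assoc_inv
    (hassoc : ∀ X Y Z : D,
      (μR X Y ▷ R.obj Z) ≫ μR (X ⊗ Y) Z ≫ R.map (α_ X Y Z).hom =
        (α_ (R.obj X) (R.obj Y) (R.obj Z)).hom ≫ (R.obj X ◁ μR Y Z) ≫ μR X (Y ⊗ Z))
    (X Y Z : D) :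
    (R.obj X ◁ μR Y Z) ≫ μR X (Y ⊗ Z) ≫ R.map (α_ X Y Z).inv =
      (α_ (R.obj X) (R.obj Y) (R.obj Z)).inv ≫ (μR X Y ▷ R.obj Z) ≫ μR (X ⊗ Y) Z := by
  rw [← cancel_mono (R.map (α_ X Y Z).hom)]
  simp only [Category.assoc, ← R.map_comp, Iso.inv_hom_id, R.map_id, Category.comp_id]
  rw [hassoc X Y Z, Iso.inv_hom_id_assoc]

/-- Naturality of `rproj` (part (b)). -/
lemma rproj_natural
    (hnat : ∀ {X Y X' Y' : D} (f : X ⟶ X') (g : Y ⟶ Y'),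
      (R.map f ⊗ₘ R.map g) ≫ μR X' Y' = μR X Y ≫ R.map (f ⊗ₘ g))
    (X : D) {A A' : C} (f : A ⟶ A') :
    (R.obj X ◁ f) ≫ rproj G R adj μR X A' =
      rproj G R adj μR X A ≫ R.map (X ◁ G.map f) := by
  have hu : f ≫ adj.unit.app A' = adj.unit.app A ≫ R.map (G.map f) := by
    simpa using adj.unit.naturality f
  have hm := muR_natural_right R μR hnat X (G.map f)
  unfold rproj
  rw [← MonoidalCategory.whiskerLeft_comp_assoc, hu,
    MonoidalCategory.whiskerLeft_comp, Category.assoc, hm, Category.assoc]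

/-- The key identity relating `rproj` on a tensor product with whiskered `rproj`s. -/
lemma rproj_key
    (hnat : ∀ {X Y X' Y' : D} (f : X ⟶ X') (g : Y ⟶ Y'),
      (R.map f ⊗ₘ R.map g) ≫ μR X' Y' = μR X Y ≫ R.map (f ⊗ₘ g))
    (hassoc : ∀ X Y Z : D,
      (μR X Y ▷ R.obj Z) ≫ μR (X ⊗ Y) Z ≫ R.map (α_ X Y Z).hom =
        (α_ (R.obj X) (R.obj Y) (R.obj Z)).hom ≫ (R.obj X ◁ μR Y Z) ≫ μR X (Y ⊗ Z))
    (hunit : ∀ A B : C,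
      (adj.unit.app A ⊗ₘ adj.unit.app B) ≫ μR (G.obj A) (G.obj B) ≫ R.map (μ G A B) =
        adj.unit.app (A ⊗ B))
    (X : D) (A B : C) :
    rproj G R adj μR X (A ⊗ B) ≫
        R.map ((X ◁ δ G A B) ≫ (α_ X (G.obj A) (G.obj B)).inv) =
      (α_ (R.obj X) A B).inv ≫ (rproj G R adj μR X A ▷ B) ≫
        rproj G R adj μR (X ⊗ G.obj A) B := by
  have hδ : adj.unit.app (A ⊗ B) ≫ R.map (δ G A B) =
      (adj.unit.app A ⊗ₘ adj.unit.app B) ≫ μR (G.obj A) (G.obj B) := by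
    rw [← hunit A B]
    simp [← R.map_comp]
  have hm := muR_natural_right R μR hnat X (δ G A B)
  have ha := muR_assoc_inv R μR hassoc X (G.obj A) (G.obj B)
  simp only [rproj, R.map_comp, Category.assoc]
  rw [← Category.assoc (μR X (G.obj (A ⊗ B))), ← hm]
  simp only [Category.assoc]
  rw [← MonoidalCategory.whiskerLeft_comp_assoc, hδ, MonoidalCategory.whiskerLeft_comp]
  simp only [Category.assoc]
  rw [ha, MonoidalCategory.comp_whiskerRight]
  simp only [Category.assoc]
  have hex := MonoidalCategory.whisker_exchange (μR X (G.obj A)) (adj.unit.app B)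
  simp only [Functor.id_obj, Functor.comp_obj] at hex
  rw [← reassoc_of% hex]
  simp [MonoidalCategory.tensorHom_def]

/-- `rproj` is compatible with `rlinor` (part (d)). -/
lemma rproj_rlinor
    (hnat : ∀ {X Y X' Y' : D} (f : X ⟶ X') (g : Y ⟶ Y'),
      (R.map f ⊗ₘ R.map g) ≫ μR X' Y' = μR X Y ≫ R.map (f ⊗ₘ g))
    (hassoc : ∀ X Y Z : D,
      (μR X Y ▷ R.obj Z) ≫ μR (X ⊗ Y) Z ≫ R.map (α_ X Y Z).hom =
        (α_ (R.obj X) (R.obj Y) (R.obj Z)).hom ≫ (R.obj X ◁ μR Y Z) ≫ μR X (Y ⊗ Z))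
    (hunit : ∀ A B : C,
      (adj.unit.app A ⊗ₘ adj.unit.app B) ≫ μR (G.obj A) (G.obj B) ≫ R.map (μ G A B) =
        adj.unit.app (A ⊗ B))
    (hiso : ∀ (X : D) (A : C), IsIso (rproj G R adj μR X A))
    (X : D) (A B : C) :
    rproj G R adj μR X (A ⊗ B) ≫ rlinor G R adj μR hiso X A B =
      (α_ (R.obj X) A B).inv ≫ (rproj G R adj μR X A ▷ B) := by
  letI := hiso (X ⊗ G.obj A) B
  rw [← cancel_mono (rproj G R adj μR (X ⊗ G.obj A) B)]
  unfold rlinor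
  simp only [Category.assoc, IsIso.inv_hom_id, Category.comp_id]
  exact rproj_key G R adj μR hnat hassoc hunit X A B

end Aux


/-- if `G ⊣ R` is a monoidal adjunction for which all right projection
formula morphisms are isomorphisms, then for each `X` the assignment `A ↦ R(X ⊗ G(A))`
is a right `C`-module endofunctor of `C` (with the right lineator `rlinor`), the
morphisms `rproj_{X,-} : (R(X) ⊗ -) ⟶ R(X ⊗ G(-))` form an isomorphism of right
`C`-module functors, and this isomorphism is monoidal. -/
theorem rproj_is_monoidal_module_isomorphism
    (G : C ⥤ D) [G.Monoidal] (R : D ⥤ C) (adj : G ⊣ R)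
    (μR : ∀ X Y : D, R.obj X ⊗ R.obj Y ⟶ R.obj (X ⊗ Y)) (εR : 𝟙_ C ⟶ R.obj (𝟙_ D))
    (hma : IsMonoidalAdjunctionStructure G R adj μR εR)
    (hiso : ∀ (X : D) (A : C), IsIso (rproj G R adj μR X A)) :
    -- (a) `A ↦ R(X ⊗ G(A))` with `rlinor` is a right `C`-module endofunctor of `C`:
    -- coherence with the associators
    (∀ (X : D) (A B B' : C),
      R.map (X ◁ G.map (α_ A B B').hom) ≫ rlinor G R adj μR hiso X A (B ⊗ B') =
        rlinor G R adj μR hiso X (A ⊗ B) B' ≫ (rlinor G R adj μR hiso X A B ▷ B') ≫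
          (α_ (R.obj (X ⊗ G.obj A)) B B').hom) ∧
    -- coherence with the right unitors
    (∀ (X : D) (A : C),
      rlinor G R adj μR hiso X A (𝟙_ C) ≫ (ρ_ (R.obj (X ⊗ G.obj A))).hom =
        R.map (X ◁ G.map (ρ_ A).hom)) ∧
    -- (b) `rproj_{X,-}` is a morphism (hence an isomorphism) of right `C`-module
    -- functors from `(R(X) ⊗ -)` to `R(X ⊗ G(-))`: it is natural ...
    (∀ (X : D) {A A' : C} (f : A ⟶ A'),
      (R.obj X ◁ f) ≫ rproj G R adj μR X A' =
        rproj G R adj μR X A ≫ R.map (X ◁ G.map f)) ∧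
    -- ... and compatible with the right lineators
    (∀ (X : D) (A B : C),
      (α_ (R.obj X) A B).inv ≫ (rproj G R adj μR X A ▷ B) =
        rproj G R adj μR X (A ⊗ B) ≫ rlinor G R adj μR hiso X A B) ∧
    -- (c) monoidality of `rproj`
    (∀ (X Y : D) (A : C),
      (μR X Y ▷ A) ≫ rproj G R adj μR (X ⊗ Y) A =
        (α_ (R.obj X) (R.obj Y) A).hom ≫ (R.obj X ◁ rproj G R adj μR Y A) ≫
          rproj G R adj μR X (R.obj (Y ⊗ G.obj A)) ≫
          R.map (X ◁ adj.counit.app (Y ⊗ G.obj A)) ≫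
          R.map (α_ X Y (G.obj A)).inv) := by
  obtain ⟨hnat, hassoc, -, -, hunit, -, -, -⟩ := hma
  have hkey := rproj_rlinor G R adj μR hnat hassoc hunit hiso
  have hnat' := rproj_natural G R adj μR hnat
  refine ⟨?_, ?_, hnat', fun X A B => (hkey X A B).symm, ?_⟩
  · -- (a) associativity coherence
    intro X A B B'
    letI := hiso X ((A ⊗ B) ⊗ B')
    rw [← cancel_epi (rproj G R adj μR X ((A ⊗ B) ⊗ B'))]
    rw [← Category.assoc, ← hnat' X (α_ A B B').hom, Category.assoc,
      hkey X A (B ⊗ B'), reassoc_of% (hkey X (A ⊗ B) B')]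
    slice_rhs 2 3 => rw [← MonoidalCategory.comp_whiskerRight, hkey X A B]
    simp only [MonoidalCategory.comp_whiskerRight, Category.assoc]
    rw [MonoidalCategory.associator_naturality_left]
    coherence
  · -- (a) right unitor coherence
    intro X A
    letI := hiso X (A ⊗ 𝟙_ C)
    rw [← cancel_epi (rproj G R adj μR X (A ⊗ 𝟙_ C))]
    rw [← Category.assoc, hkey X A (𝟙_ C), ← hnat' X (ρ_ A).hom]
    simp
  · -- (c) monoidality
    intro X Y A
    have hε := adj.right_triangle_components (Y ⊗ G.obj A)
    have hm := muR_natural_right R μR hnat X (adj.counit.app (Y ⊗ G.obj A))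
    simp only [Functor.comp_obj, Functor.id_obj, Functor.id_map] at hε hm
    have h1 : rproj G R adj μR X (R.obj (Y ⊗ G.obj A)) ≫
        R.map (X ◁ adj.counit.app (Y ⊗ G.obj A)) = μR X (Y ⊗ G.obj A) := by
      unfold rproj
      rw [Category.assoc, ← hm, ← MonoidalCategory.whiskerLeft_comp_assoc, hε]
      simp
    rw [reassoc_of% h1]
    have ha := muR_assoc_inv R μR hassoc X Y (G.obj A)
    simp only [rproj, MonoidalCategory.whiskerLeft_comp, Category.assoc]
    rw [ha, ← MonoidalCategory.whisker_exchange_assoc]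
    rw [← MonoidalCategory.associator_naturality_right_assoc]
    simp
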